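/- arXiv:1310.3723 — 8 statements merged into one kernel-verified Lean document; each statement's English description precedes it below -/
import Mathlib

section
/- The purge function is idempotent when all filter functions only depend on the purged prefix: if for every edge (d, f, π) and sequences α, β with purge_π(α) = purge_π(β) we have f(α·a) = f(β·a) for all actions a, then purge_π(purge_π(α)) = purge_π(α) for all α. -/
open scoped Classical

/-- A security policy over domains `D` and actions `A`: a flow relation between
domains, optional filter functions labeling edges, and a domain assignment. -/
structure Policy (D A : Type) where
  flows : D → D → Prop
  filt : D → D → Option (List A → Bool)
  dom : A → D

/-- Action `a` is visible to domain `π` after the prefix `α`: the domain of `a`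
flows to `π` and any filter on the edge evaluates to true on `α·a`. -/
def Policy.visible {D A : Type} (P : Policy D A) (π : D) (α : List A) (a : A) : Prop :=
  P.flows (P.dom a) π ∧ ∀ f ∈ P.filt (P.dom a) π, f (α ++ [a]) = true

/-- Helper for `purge`: `pre` is the prefix of actions already processed. -/
noncomputable def Policy.purgeFrom {D A : Type} (P : Policy D A) (π : D) :
    List A → List A → List A
  | _, [] => []
  | pre, a :: rest =>
      (if P.visible π pre a then [a] else []) ++ P.purgeFrom π (pre ++ [a]) rest

/-- The purge function: `purge π ε = ε`; `purge π (α·a) = purge π α · a` if `a`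
is visible to `π` after `α`, and `purge π (α·a) = purge π α` otherwise. -/
noncomputable def Policy.purge {D A : Type} (P : Policy D A) (π : D) (α : List A) : List A :=
  P.purgeFrom π [] α

section
variable {D A : Type} (P : Policy D A) (π : D)

lemma purgeFrom_append : ∀ (α β pre : List A),
    P.purgeFrom π pre (α ++ β) = P.purgeFrom π pre α ++ P.purgeFrom π (pre ++ α) β
  | [], β, pre => by simp [Policy.purgeFrom]
  | a :: rest, β, pre => by
      show _ ++ P.purgeFrom π (pre ++ [a]) (rest ++ β) = _
      rw [purgeFrom_append rest β (pre ++ [a]), List.append_assoc]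
      simp [Policy.purgeFrom]

lemma purge_snoc (pre : List A) (a : A) :
    P.purge π (pre ++ [a]) = P.purge π pre ++ (if P.visible π pre a then [a] else []) := by
  simp [Policy.purge, purgeFrom_append P π pre [a] [], Policy.purgeFrom]

variable (hfilt : ∀ (d : D) (f : List A → Bool), P.flows d π → P.filt d π = some f →
      ∀ α β : List A, P.purge π α = P.purge π β →
        ∀ a : A, f (α ++ [a]) = f (β ++ [a]))

include hfilt in
lemma visible_congr {pre pre' : List A} (h : P.purge π pre = P.purge π pre') (a : A) :
    P.visible π pre a ↔ P.visible π pre' a := by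
  unfold Policy.visible
  constructor <;> rintro ⟨hf, hv⟩ <;> refine ⟨hf, fun f hmem => ?_⟩
  · rw [← hfilt _ f hf hmem pre pre' h a]; exact hv f hmem
  · rw [hfilt _ f hf hmem pre pre' h a]; exact hv f hmem

include hfilt in
lemma purgeFrom_purgeFrom : ∀ (α pre pre' : List A),
    P.purge π pre' = P.purge π pre →
    P.purgeFrom π pre' (P.purgeFrom π pre α) = P.purgeFrom π pre α
  | [], pre, pre', h => by simp [Policy.purgeFrom]
  | a :: rest, pre, pre', h => by
      by_cases hv : P.visible π pre a
      · have hv' : P.visible π pre' a := (visible_congr P π hfilt h.symm a).mp hv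
        simp only [Policy.purgeFrom, if_pos hv, List.singleton_append, if_pos hv']
        congr 1
        exact purgeFrom_purgeFrom rest (pre ++ [a]) (pre' ++ [a])
          (by rw [purge_snoc, purge_snoc, h, if_pos hv, if_pos hv'])
      · simp only [Policy.purgeFrom, if_neg hv, List.nil_append]
        exact purgeFrom_purgeFrom rest (pre ++ [a]) pre'
          (by rw [purge_snoc, h, if_neg hv, List.append_nil])

end

/-- purge is idempotent when all filter functions only depend on
the purged prefix. -/
theorem purge_idem {D A : Type} (P : Policy D A) (π : D)
    (hfilt : ∀ (d : D) (f : List A → Bool), P.flows d π → P.filt d π = some f →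
      ∀ α β : List A, P.purge π α = P.purge π β →
        ∀ a : A, f (α ++ [a]) = f (β ++ [a])) :
    ∀ α : List A, P.purge π (P.purge π α) = P.purge π α := by
  exact fun α => purgeFrom_purgeFrom P π hfilt α [] [] rfl
end

section
/- Unwinding theorem without filters: if a machine M admits a family of equivalence relations {∼_π}_{π∈D} satisfying output consistency (s ∼_π t implies obs(π,s) = obs(π,t)), step consistency (s ∼_π t implies step(s,a) ∼_π step(t,a) for all actions a), and local respect (dom(a) does not flow to π implies s ∼_π step(s,a)), then for all executions α, β: purge_π(α) = purge_π(β) implies obs_π(s⁰·α) = obs_π(s⁰·β). -/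
open scoped Classical

section Aux
variable {S A D : Type} (flows : D → D → Prop) (dom : A → D)

lemma visible_iff' (π : D) (pre : List A) (a : A) :
    (Policy.mk flows (fun _ _ => none) dom).visible π pre a ↔ flows (dom a) π := by
  simp [Policy.visible]

lemma purgeFrom_pre' (π : D) (α : List A) : ∀ pre pre' : List A,
    (Policy.mk flows (fun _ _ => none) dom).purgeFrom π pre α
      = (Policy.mk flows (fun _ _ => none) dom).purgeFrom π pre' α := by
  induction α with
  | nil => intro _ _; rfl
  | cons a rest ih =>
    intro pre pre'
    simp only [Policy.purgeFrom]
    rw [ih (pre ++ [a]) (pre' ++ [a])]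
    by_cases hv : flows (dom a) π <;> simp [visible_iff', hv]

lemma purge_cons' (π : D) (a : A) (rest : List A) :
    (Policy.mk flows (fun _ _ => none) dom).purge π (a :: rest)
      = (if flows (dom a) π then [a] else [])
        ++ (Policy.mk flows (fun _ _ => none) dom).purge π rest := by
  simp only [Policy.purge, Policy.purgeFrom]
  rw [purgeFrom_pre' flows dom π rest ([] ++ [a]) []]
  by_cases hv : flows (dom a) π <;> simp [visible_iff', hv]

variable (step : S → A → S) (sim : D → S → S → Prop)

lemma dead_prefix' (hequiv : ∀ π : D, Equivalence (sim π))
    (LR : ∀ (π : D) (a : A) (s : S), ¬ flows (dom a) π → sim π s (step s a))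
    (π : D) :
    ∀ (β : List A) (s t : S),
      (Policy.mk flows (fun _ _ => none) dom).purge π β = [] →
      sim π s t → sim π s (List.foldl step t β) := by
  intro β
  induction β with
  | nil => intro s t _ hst; exact hst
  | cons b β' ih =>
    intro s t h hst
    rw [purge_cons' ] at h
    by_cases hb : flows (dom b) π
    · simp [hb] at h
    · simp [hb] at h
      exact ih s (step t b) h ((hequiv π).trans hst (LR π b t hb))

lemma find' (hequiv : ∀ π : D, Equivalence (sim π))
    (SC : ∀ (π : D) (s t : S) (a : A), sim π s t → sim π (step s a) (step t a))
    (LR : ∀ (π : D) (a : A) (s : S), ¬ flows (dom a) π → sim π s (step s a))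
    (π : D) (a : A) (L : List A) (s : S) :
    ∀ (β : List A) (t : S),
      (Policy.mk flows (fun _ _ => none) dom).purge π β = a :: L →
      sim π s t →
      ∃ (β' : List A) (t' : S),
        List.foldl step t β = List.foldl step t' β' ∧
        (Policy.mk flows (fun _ _ => none) dom).purge π β' = L ∧
        sim π (step s a) t' := by
  intro β
  induction β with
  | nil => intro t h _; simp [Policy.purge, Policy.purgeFrom] at h
  | cons b β'' ih =>
    intro t h hst
    rw [purge_cons'] at h
    by_cases hb : flows (dom b) π
    · simp [hb] at h
      obtain ⟨hab, hrest⟩ := h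
      subst hab
      exact ⟨β'', step t b, by simp, hrest, SC π s t b hst⟩
    · simp [hb] at h
      obtain ⟨β', t', h1, h2, h3⟩ := ih (step t b) h ((hequiv π).trans hst (LR π b t hb))
      exact ⟨β', t', by simpa using h1, h2, h3⟩

lemma main_aux' (hequiv : ∀ π : D, Equivalence (sim π))
    (SC : ∀ (π : D) (s t : S) (a : A), sim π s t → sim π (step s a) (step t a))
    (LR : ∀ (π : D) (a : A) (s : S), ¬ flows (dom a) π → sim π s (step s a))
    (π : D) :
    ∀ (α β : List A) (s t : S),
      sim π s t →
      (Policy.mk flows (fun _ _ => none) dom).purge π α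
        = (Policy.mk flows (fun _ _ => none) dom).purge π β →
      sim π (List.foldl step s α) (List.foldl step t β) := by
  intro α
  induction α with
  | nil =>
    intro β s t hst h
    exact dead_prefix' flows dom step sim hequiv LR π β s t h.symm hst
  | cons a α' ih =>
    intro β s t hst h
    rw [purge_cons'] at h
    by_cases ha : flows (dom a) π
    · simp [ha] at h
      obtain ⟨β', t', h1, h2, h3⟩ :=
        find' flows dom step sim hequiv SC LR π a _ s β t h.symm hst
      rw [List.foldl_cons, h1]
      exact ih β' (step s a) t' h3 h2.symm
    · simp [ha] at h
      rw [List.foldl_cons]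
      exact ih β (step s a) t ((hequiv π).trans ((hequiv π).symm (LR π a s ha)) hst) h

end Aux

/-- unwinding theorem without filters. If a machine admits a
family of equivalence relations satisfying output consistency, step
consistency, and local respect, then equal purges imply equal observations. -/
theorem unwinding_no_filters {S A D O : Type}
    (step : S → A → S) (s0 : S) (dom : A → D) (flows : D → D → Prop)
    (hrefl : ∀ d : D, flows d d)
    (obs : D → S → O) (sim : D → S → S → Prop)
    (hequiv : ∀ π : D, Equivalence (sim π))
    (OC : ∀ (π : D) (s t : S), sim π s t → obs π s = obs π t)
    (SC : ∀ (π : D) (s t : S) (a : A), sim π s t → sim π (step s a) (step t a))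
    (LR : ∀ (π : D) (a : A) (s : S), ¬ flows (dom a) π → sim π s (step s a))
    (π : D) (α β : List A)
    (h : (Policy.mk flows (fun _ _ => none) dom).purge π α
       = (Policy.mk flows (fun _ _ => none) dom).purge π β) :
    obs π (List.foldl step s0 α) = obs π (List.foldl step s0 β) := by
  exact OC π _ _ (main_aux' flows dom step sim hequiv SC LR π α β s0 s0 ((hequiv π).refl s0) h)
end

section
/- Unwinding theorem with filter functions: if a machine M admits equivalence relations {∼_π}_{π∈D} satisfying output consistency, step consistency, local respect (if dom(a) ⤳̸ π, or the edge from dom(a) to π carries filter f with f(α·a) = false where α·a is a valid execution ending in state s, then s ∼_π step(s,a)), then for all valid executions α, β with purge_π(α) = purge_π(β), we have obs_π(s⁰·α) = obs_π(s⁰·β). -/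
open scoped Classical

/-- Partial run function: the state reached from `s` by executing a sequence
of actions, `none` if some action along the way is not executable. -/
def runP {S A : Type} (step : S → A → Option S) : S → List A → Option S
  | s, [] => some s
  | s, a :: rest => (step s a).bind (fun s' => runP step s' rest)


private theorem runP_append {S A : Type} (step : S → A → Option S) :
    ∀ (l1 l2 : List A) (s : S),
      runP step s (l1 ++ l2) = (runP step s l1).bind (fun s' => runP step s' l2)
  | [], l2, s => rfl
  | a :: rest, l2, s => by
    show (step s a).bind _ = ((step s a).bind _).bind _
    cases step s a with
    | none => rfl
    | some s' => exact runP_append step rest l2 s'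

private theorem unwind_aux {S A D : Type}
    (step : S → A → Option S) (s0 : S) (P : Policy D A)
    (sim : D → S → S → Prop)
    (hequiv : ∀ π : D, Equivalence (sim π))
    (SC : ∀ (π : D) (s t : S) (a : A) (s' t' : S),
      sim π s t → step s a = some s' → step t a = some t' → sim π s' t')
    (LR : ∀ (π : D) (α : List A) (a : A) (s s' : S),
      runP step s0 α = some s → step s a = some s' →
      ¬ P.visible π α a → sim π s s')
    (π : D) :
    ∀ (n : ℕ) (α β preα preβ : List A) (s t sα sβ : S),
      α.length + β.length ≤ n →
      runP step s0 preα = some s → runP step s0 preβ = some t →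
      runP step s α = some sα → runP step t β = some sβ →
      P.purgeFrom π preα α = P.purgeFrom π preβ β →
      sim π s t → sim π sα sβ := by
  intro n
  induction n with
  | zero =>
    intro α β preα preβ s t sα sβ hlen _ _ hrα hrβ _ hst
    have hα0 : α = [] := List.eq_nil_of_length_eq_zero (by omega)
    have hβ0 : β = [] := List.eq_nil_of_length_eq_zero (by omega)
    subst hα0; subst hβ0
    simp only [runP] at hrα hrβ
    cases hrα; cases hrβ; exact hst
  | succ n ih =>
    intro α β preα preβ s t sα sβ hlen hpre hpre' hrα hrβ hpurge hst
    match α, β with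
    | [], [] =>
      simp only [runP] at hrα hrβ
      cases hrα; cases hrβ; exact hst
    | [], b :: restβ =>
      simp only [Policy.purgeFrom] at hpurge
      by_cases hv : P.visible π preβ b
      · simp [hv] at hpurge
      · simp only [if_neg hv, List.nil_append] at hpurge
        simp only [runP] at hrβ
        cases ht' : step t b with
        | none => rw [ht'] at hrβ; exact absurd hrβ (by simp)
        | some t' =>
          rw [ht'] at hrβ; simp only [Option.bind_some] at hrβ
          have htt' : sim π t t' := LR π preβ b t t' hpre' ht' hv
          have hpre'' : runP step s0 (preβ ++ [b]) = some t' := by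
            rw [runP_append, hpre']; simpa [runP] using ht'
          exact ih [] restβ preα (preβ ++ [b]) s t' sα sβ
            (by simp only [List.length_cons, List.length_nil] at *; omega) hpre hpre'' hrα hrβ hpurge
            ((hequiv π).trans hst htt')
    | a :: restα, β =>
      by_cases hv : P.visible π preα a
      · -- head of purge of α is a
        match β with
        | [] =>
          simp only [Policy.purgeFrom, if_pos hv] at hpurge
          simp at hpurge
        | b :: restβ =>
          by_cases hv' : P.visible π preβ b
          · simp only [Policy.purgeFrom, if_pos hv, if_pos hv',
              List.singleton_append, List.cons.injEq] at hpurge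
            obtain ⟨hab, hpurge'⟩ := hpurge
            subst hab
            simp only [runP] at hrα hrβ
            cases hs' : step s a with
            | none => rw [hs'] at hrα; exact absurd hrα (by simp)
            | some s' =>
            cases ht' : step t a with
            | none => rw [ht'] at hrβ; exact absurd hrβ (by simp)
            | some t' =>
              rw [hs'] at hrα; rw [ht'] at hrβ
              simp only [Option.bind_some] at hrα hrβ
              have hs0s' : runP step s0 (preα ++ [a]) = some s' := by
                rw [runP_append, hpre]; simpa [runP] using hs'
              have hs0t' : runP step s0 (preβ ++ [a]) = some t' := by
                rw [runP_append, hpre']; simpa [runP] using ht'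
              exact ih restα restβ (preα ++ [a]) (preβ ++ [a]) s' t' sα sβ
                (by simp only [List.length_cons, List.length_nil] at *; omega) hs0s' hs0t' hrα hrβ hpurge'
                (SC π s t a s' t' hst hs' ht')
          · simp only [Policy.purgeFrom, if_neg hv', List.nil_append] at hpurge
            simp only [runP] at hrβ
            cases ht' : step t b with
            | none => rw [ht'] at hrβ; exact absurd hrβ (by simp)
            | some t' =>
              rw [ht'] at hrβ; simp only [Option.bind_some] at hrβ
              have htt' : sim π t t' := LR π preβ b t t' hpre' ht' hv'
              have hpre'' : runP step s0 (preβ ++ [b]) = some t' := by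
                rw [runP_append, hpre']; simpa [runP] using ht'
              exact ih (a :: restα) restβ preα (preβ ++ [b]) s t' sα sβ
                (by simp only [List.length_cons, List.length_nil] at *; omega) hpre hpre'' hrα hrβ hpurge
                ((hequiv π).trans hst htt')
      · simp only [Policy.purgeFrom, if_neg hv, List.nil_append] at hpurge
        simp only [runP] at hrα
        cases hs' : step s a with
        | none => rw [hs'] at hrα; exact absurd hrα (by simp)
        | some s' =>
          rw [hs'] at hrα; simp only [Option.bind_some] at hrα
          have hss' : sim π s s' := LR π preα a s s' hpre hs' hv
          have hpre'' : runP step s0 (preα ++ [a]) = some s' := by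
            rw [runP_append, hpre]; simpa [runP] using hs'
          exact ih restα β (preα ++ [a]) preβ s' t sα sβ
            (by simp only [List.length_cons, List.length_nil] at *; omega) hpre'' hpre' hrα hrβ hpurge
            ((hequiv π).trans ((hequiv π).symm hss') hst)

/-- unwinding theorem with filter functions, for a machine with a
partial step function: output consistency, step consistency and local respect
(with filters, on valid executions) imply that valid executions with equal
purges yield equal observations. -/
theorem unwinding_filters {S A D O : Type}
    (step : S → A → Option S) (s0 : S) (P : Policy D A)
    (obs : D → S → O) (sim : D → S → S → Prop)
    (hequiv : ∀ π : D, Equivalence (sim π))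
    (OC : ∀ (π : D) (s t : S), sim π s t → obs π s = obs π t)
    (SC : ∀ (π : D) (s t : S) (a : A) (s' t' : S),
      sim π s t → step s a = some s' → step t a = some t' → sim π s' t')
    (LR : ∀ (π : D) (α : List A) (a : A) (s s' : S),
      runP step s0 α = some s → step s a = some s' →
      ¬ P.visible π α a → sim π s s')
    (π : D) (α β : List A) (sα sβ : S)
    (hα : runP step s0 α = some sα) (hβ : runP step s0 β = some sβ)
    (h : P.purge π α = P.purge π β) :
    obs π sα = obs π sβ := by
  exact OC π sα sβ (unwind_aux step s0 P sim hequiv SC LR π (α.length + β.length)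
    α β [] [] s0 s0 sα sβ le_rfl rfl rfl hα hβ h ((hequiv π).refl s0))
end

section
/- A distributed machine complies with its implicit security policy: for every process π_i and all global executions α, β, if purge_{π_i}(α) = purge_{π_i}(β) then obs_{π_i}(s⁰·α) = obs_{π_i}(s⁰·β), where the implicit policy has an edge π_i ⤳ π_j exactly when some message sent by π_i is received by π_j (plus reflexive edges). -/
open scoped Classical

/-- Actions of a distributed machine: sending a message, or a reception of a
message by a given process. -/
inductive Act (ι M : Type) : Type
  | send : M → Act ι M
  | recv : ι → M → Act ι M

/-- The message underlying an action. -/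
def Act.msg {ι M : Type} : Act ι M → M
  | .send m => m
  | .recv _ m => m

/-- A distributed machine: a family of processes indexed by `ι`, with local
states in `S`, messages in `M`, a unique sender for each message, input sets,
and partial local transition functions. -/
structure DM (ι S M : Type) where
  init : ι → S
  sender : M → ι
  isInput : ι → M → Bool
  stepL : ι → S → Act ι M → Option S

/-- The security domain of an action: the sender of its message. -/
def DM.dom {ι S M : Type} (D : DM ι S M) : Act ι M → ι :=
  fun a => D.sender a.msg

/-- The process executing an action (`A_i^in ∪ A_i^out` membership). -/
def DM.actOf {ι S M : Type} (D : DM ι S M) : Act ι M → ι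
  | .send m => D.sender m
  | .recv j _ => j

/-- Global step of the distributed machine. Sending a message advances the
sender's local state and appends the message to the buffer of each receiver;
receiving removes the first consumable occurrence of the message from the
receiver's buffer and advances its local state. -/
inductive DM.GStep {ι S M : Type} (D : DM ι S M) :
    (ι → S × List M) → Act ι M → (ι → S × List M) → Prop
  | send (q : ι → S × List M) (m : M) (s' : S)
      (hs : D.stepL (D.sender m) (q (D.sender m)).1 (.send m) = some s') :
      D.GStep q (.send m)
        (fun j => (if j = D.sender m then s' else (q j).1,
                   if D.isInput j m then (q j).2 ++ [m] else (q j).2))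
  | recv (q : ι → S × List M) (i : ι) (m : M) (s' : S) (α₁ α₂ : List M)
      (hin : D.isInput i m = true)
      (hbuf : (q i).2 = α₁ ++ m :: α₂)
      (hfirst : ∀ b ∈ α₁, D.stepL i (q i).1 (.recv i b) = none)
      (hs : D.stepL i (q i).1 (.recv i m) = some s') :
      D.GStep q (.recv i m) (Function.update q i (s', α₁ ++ α₂))

/-- Valid global executions: `D.Run q α q'` means the sequence `α` is
executable from global state `q` and leads to `q'`. -/
inductive DM.Run {ι S M : Type} (D : DM ι S M) :
    (ι → S × List M) → List (Act ι M) → (ι → S × List M) → Prop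
  | nil (q : ι → S × List M) : D.Run q [] q
  | cons {q q' q'' : ι → S × List M} {a : Act ι M} {α : List (Act ι M)} :
      D.GStep q a q' → D.Run q' α q'' → D.Run q (a :: α) q''

/-- Initial global state: every process in its initial state, empty buffers. -/
def DM.gInit {ι S M : Type} (D : DM ι S M) : ι → S × List M :=
  fun i => (D.init i, [])

/-- Observation of process `πᵢ`: its own local state and input buffer. -/
def DM.obs {ι S M : Type} (_ : DM ι S M) (i : ι) (q : ι → S × List M) : S × List M :=
  q i

/-- Implicit security policy flow relation: `πᵢ ⤳ πⱼ` iff `i = j` or some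
message sent by `πᵢ` is received by `πⱼ`. -/
def DM.iflows {ι S M : Type} (D : DM ι S M) (i j : ι) : Prop :=
  i = j ∨ ∃ m : M, D.sender m = i ∧ D.isInput j m = true

/-- Purge w.r.t. the implicit (filterless) security policy: keep exactly the
actions whose domain flows to `πᵢ`. -/
noncomputable def DM.ipurge {ι S M : Type} (D : DM ι S M) (i : ι)
    (α : List (Act ι M)) : List (Act ι M) :=
  α.filter (fun a => decide (D.iflows (D.dom a) i))

/-- Local effect of an action on the component of process `i`. -/
noncomputable def DM.eff {ι S M : Type} (D : DM ι S M) (i : ι)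
    (a : Act ι M) (c : S × List M) : S × List M :=
  match a with
  | .send m =>
      (if i = D.sender m then (D.stepL i c.1 (.send m)).getD c.1 else c.1,
       if D.isInput i m then c.2 ++ [m] else c.2)
  | .recv j m =>
      if j = i then
        ((D.stepL i c.1 (.recv i m)).getD c.1,
         c.2.takeWhile (fun b => (D.stepL i c.1 (.recv i b)).isNone) ++
           (c.2.dropWhile (fun b => (D.stepL i c.1 (.recv i b)).isNone)).tail)
      else c

lemma takeWhile_eq_of {α : Type} (p : α → Bool) (l₁ l₂ : List α) (a : α)
    (h1 : ∀ b ∈ l₁, p b = true) (h2 : p a = false) :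
    (l₁ ++ a :: l₂).takeWhile p = l₁ ∧ (l₁ ++ a :: l₂).dropWhile p = a :: l₂ := by
  induction l₁ with
  | nil => simp [List.takeWhile, List.dropWhile, h2]
  | cons b l ih =>
      have hb : p b = true := h1 b (by simp)
      have := ih (fun c hc => h1 c (by simp [hc]))
      simp [List.takeWhile, List.dropWhile, hb, this.1, this.2]

lemma gstep_eff {ι S M : Type} (D : DM ι S M) (i : ι)
    {q q' : ι → S × List M} {a : Act ι M} (h : D.GStep q a q') :
    q' i = D.eff i a (q i) := by
  cases h with
  | send m s' hs =>
      simp only [DM.eff]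
      by_cases hi : i = D.sender m
      · subst hi; simp [hs]
      · simp [hi]
  | recv j m s' α₁ α₂ hin hbuf hfirst hs =>
      by_cases hj : j = i
      · subst hj
        have h1 : ∀ b ∈ α₁, ((D.stepL j (q j).1 (.recv j b)).isNone
            : Bool) = true := by
          intro b hb; simp [hfirst b hb]
        have h2 : ((D.stepL j (q j).1 (.recv j m)).isNone : Bool) = false := by
          simp [hs]
        have := takeWhile_eq_of _ α₁ α₂ m h1 h2
        simp [DM.eff, Function.update_self, hbuf, this.1, this.2, hs]
      · simp [DM.eff, Function.update_of_ne (Ne.symm hj), hj]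

lemma gstep_purged {ι S M : Type} (D : DM ι S M) (i : ι)
    {q q' : ι → S × List M} {a : Act ι M} (h : D.GStep q a q')
    (hp : ¬ D.iflows (D.dom a) i) : q' i = q i := by
  cases h with
  | send m s' hs =>
      have hne : i ≠ D.sender m := fun hh => hp (Or.inl hh.symm)
      have hinp : D.isInput i m = false := by
        by_contra hc
        exact hp (Or.inr ⟨m, rfl, by simpa using hc⟩)
      simp [hinp, hne]
  | recv j m s' α₁ α₂ hin hbuf hfirst hs =>
      have hj : j ≠ i := by
        intro hh; subst hh
        exact hp (Or.inr ⟨m, rfl, hin⟩)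
      simp [Function.update_of_ne (Ne.symm hj)]

lemma run_foldl {ι S M : Type} (D : DM ι S M) (i : ι) :
    ∀ {q : ι → S × List M} {α : List (Act ι M)} {q' : ι → S × List M},
      D.Run q α q' →
      q' i = (D.ipurge i α).foldl (fun c a => D.eff i a c) (q i) := by
  intro q α q' h
  induction h with
  | nil q => simp [DM.ipurge]
  | @cons q q' q'' a α hstep hrun ih =>
      by_cases hp : D.iflows (D.dom a) i
      · have : D.ipurge i (a :: α) = a :: D.ipurge i α := by
          simp [DM.ipurge, List.filter_cons, hp]
        rw [this, List.foldl_cons, ← gstep_eff D i hstep, ih]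
      · have : D.ipurge i (a :: α) = D.ipurge i α := by
          simp [DM.ipurge, List.filter_cons, hp]
        rw [this, ih, gstep_purged D i hstep hp]

/-- a distributed machine complies with its implicit security
policy: for every process `πᵢ` and all global executions `α, β`, equal purges
(w.r.t. the implicit policy) imply equal observations. -/
theorem implicit_compliance {ι S M : Type} (D : DM ι S M)
    (i : ι) (α β : List (Act ι M)) (qα qβ : ι → S × List M)
    (hα : D.Run D.gInit α qα) (hβ : D.Run D.gInit β qβ)
    (h : D.ipurge i α = D.ipurge i β) :
    D.obs i qα = D.obs i qβ := by
  have h1 := run_foldl D i hα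
  have h2 := run_foldl D i hβ
  simp only [DM.obs, h1, h2, h]
end

section
/- Step consistency of the componentwise unwinding relation: for a distributed machine, if q ∼_{π_i} r (i.e., q_i = r_i) and action a (a send !m or receive ?_{π_j} m) is executable from both q and r, then step(q, a) ∼_{π_i} step(r, a). -/
open scoped Classical

/-- step consistency of the componentwise unwinding relation:
if `q i = r i` and the action `a` is executable from both `q` and `r`, then
the successor states again agree on the `i`-th component.

Uniqueness of the first-consumable decomposition. -/
theorem first_decomp_unique {M S : Type} (f : M → Option S) (m : M) (s : S)
    (hm : f m = some s) :
    ∀ (α₁ α₂ β₁ β₂ : List M), α₁ ++ m :: α₂ = β₁ ++ m :: β₂ →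
      (∀ b ∈ α₁, f b = none) → (∀ b ∈ β₁, f b = none) →
      α₁ = β₁ ∧ α₂ = β₂ := by
  intro α₁
  induction α₁ with
  | nil =>
    intro α₂ β₁ β₂ heq hα hβ
    cases β₁ with
    | nil => simpa using heq
    | cons b β₁' =>
      simp only [List.nil_append, List.cons_append, List.cons.injEq] at heq
      exfalso
      have := hβ b (by simp)
      rw [← heq.1, hm] at this
      exact Option.some_ne_none _ this
  | cons a α₁' ih =>
    intro α₂ β₁ β₂ heq hα hβ
    cases β₁ with
    | nil =>
      simp only [List.cons_append, List.nil_append, List.cons.injEq] at heq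
      exfalso
      have := hα a (by simp)
      rw [heq.1, hm] at this
      exact Option.some_ne_none _ this
    | cons b β₁' =>
      simp only [List.cons_append, List.cons.injEq] at heq
      obtain ⟨h1, h2⟩ := heq
      obtain ⟨e1, e2⟩ := ih α₂ β₁' β₂ h2 (fun x hx => hα x (by simp [hx]))
        (fun x hx => hβ x (by simp [hx]))
      exact ⟨by rw [h1, e1], e2⟩

/-- step consistency of the componentwise unwinding relation:
if `q i = r i` and the action `a` is executable from both `q` and `r`, then
the successor states again agree on the `i`-th component. -/
theorem step_consistency {ι S M : Type} (D : DM ι S M)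
    (i : ι) (q r q' r' : ι → S × List M) (a : Act ι M)
    (h : q i = r i)
    (hq : D.GStep q a q') (hr : D.GStep r a r') :
    q' i = r' i := by
  cases hq with
  | send m s' hs =>
    cases hr with
    | send m s'' hs' =>
      by_cases hi : i = D.sender m
      · subst hi
        rw [h] at hs
        rw [hs] at hs'
        cases Option.some.inj hs'
        simp [h]
      · simp [hi, h]
  | recv j m s' α₁ α₂ hin hbuf hfirst hs =>
    cases hr with
    | recv j m s'' β₁ β₂ hin' hbuf' hfirst' hs' =>
      by_cases hi : i = j
      · subst hi
        rw [h] at hbuf hfirst hs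
        obtain ⟨e1, e2⟩ := first_decomp_unique (fun b => D.stepL i (r i).1 (.recv i b))
          m s'' hs' α₁ α₂ β₁ β₂ (hbuf.symm.trans hbuf') hfirst hfirst'
        rw [hs] at hs'
        cases Option.some.inj hs'
        simp [Function.update_self, e1, e2]
      · simp [Function.update_of_ne hi, h]
end

section
/- In a distributed machine, the local state and buffer of process π_i after a global execution α is determined by the subsequence of α consisting of actions a with dom(a) ⤳ π_i in the implicit policy: if two executions α, β agree on this subsequence, then the i-th components of s⁰·α and s⁰·β are equal. -/
open scoped Classical

/-- Uniqueness of the "first consumable occurrence" decomposition. -/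
lemma split_unique {M : Type} (p : M → Prop) :
    ∀ (l1 l1' : List M) (x : M) (l2 l2' : List M),
      l1 ++ x :: l2 = l1' ++ x :: l2' →
      (∀ b ∈ l1, ¬ p b) → (∀ b ∈ l1', ¬ p b) → p x →
      l1 = l1' ∧ l2 = l2' := by
  intro l1
  induction l1 with
  | nil =>
    intro l1' x l2 l2' h h1 h2 hx
    cases l1' with
    | nil => simpa using h
    | cons a t =>
      simp only [List.nil_append, List.cons_append, List.cons.injEq] at h
      exact absurd (h.1 ▸ hx) (h2 a (by simp))
  | cons a t ih =>
    intro l1' x l2 l2' h h1 h2 hx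
    cases l1' with
    | nil =>
      simp only [List.nil_append, List.cons_append, List.cons.injEq] at h
      exact absurd (h.1.symm ▸ hx) (h1 a (by simp))
    | cons a' t' =>
      simp only [List.cons_append, List.cons.injEq] at h
      obtain ⟨rfl, h⟩ := h
      obtain ⟨h3, h4⟩ := ih t' x l2 l2' h (fun b hb => h1 b (by simp [hb]))
        (fun b hb => h2 b (by simp [hb])) hx
      exact ⟨by rw [h3], h4⟩

/-- A step whose domain does not flow to `πᵢ` leaves `πᵢ`'s component alone. -/
lemma DM.gstep_skip {ι S M : Type} (D : DM ι S M) (i : ι)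
    {q q' : ι → S × List M} {a : Act ι M}
    (h : D.GStep q a q') (hn : ¬ D.iflows (D.dom a) i) : q' i = q i := by
  cases h with
  | send m s' hs =>
    have h1 : ¬ (i = D.sender m) := fun e => hn (Or.inl e.symm)
    have h2 : D.isInput i m ≠ true := fun e => hn (Or.inr ⟨m, rfl, e⟩)
    simp only [Bool.not_eq_true] at h2
    simp [h1, h2]
  | recv j m s' α₁ α₂ hin hbuf hfirst hs =>
    have hji : j ≠ i := fun e => hn (Or.inr ⟨m, rfl, e ▸ hin⟩)
    simp [Function.update_of_ne (Ne.symm hji)]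

/-- Two steps with the same action from states agreeing at `i` agree at `i`. -/
lemma DM.gstep_agree {ι S M : Type} (D : DM ι S M) (i : ι)
    {q r q' r' : ι → S × List M} {a : Act ι M}
    (hq : D.GStep q a q') (hr : D.GStep r a r') (h : q i = r i) :
    q' i = r' i := by
  cases hq with
  | send m s' hs =>
    cases hr with
    | send _ s'' hs' =>
      by_cases hi : i = D.sender m
      · subst hi
        rw [h] at hs; rw [hs'] at hs
        simp only [Option.some.injEq] at hs
        simp [hs, h]
      · simp [hi, h]
  | recv j m s' α₁ α₂ hin hbuf hfirst hs =>
    cases hr with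
    | recv _ _ s'' β₁ β₂ hin' hbuf' hfirst' hs' =>
      by_cases hi : j = i
      · subst hi
        have hb : α₁ ++ m :: α₂ = β₁ ++ m :: β₂ := by
          rw [← hbuf, h, hbuf']
        obtain ⟨h1, h2⟩ := split_unique
          (fun b => (D.stepL j (q j).1 (.recv j b)).isSome) α₁ β₁ m α₂ β₂ hb
          (fun b hb => by simp [hfirst b hb])
          (fun b hb => by rw [h]; simp [hfirst' b hb])
          (by simp [hs])
        rw [h] at hs; rw [hs'] at hs
        simp only [Option.some.injEq] at hs
        simp [Function.update_self, hs, h1, h2]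
      · simp [Function.update_of_ne (Ne.symm hi), h]

lemma DM.run_agree {ι S M : Type} (D : DM ι S M) (i : ι) :
    ∀ (α β : List (Act ι M)) (q r qα qβ : ι → S × List M),
      D.Run q α qα → D.Run r β qβ → q i = r i →
      α.filter (fun a => decide (D.iflows (D.dom a) i))
        = β.filter (fun a => decide (D.iflows (D.dom a) i)) →
      qα i = qβ i := by
  intro α
  induction α with
  | nil =>
    intro β
    induction β with
    | nil =>
      intro q r qα qβ hq hr hqr _
      cases hq; cases hr; exact hqr
    | cons b β' ihβ =>
      intro q r qα qβ hq hr hqr hf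
      cases hr with
      | cons hstep hrun =>
        have hb : ¬ D.iflows (D.dom b) i := by
          intro hb
          simp [hb] at hf
        exact ihβ q _ qα qβ hq hrun
          (by rw [hqr, ← D.gstep_skip i hstep hb]) (by simpa [hb] using hf)
  | cons a α' ihα =>
    intro β
    induction β with
    | nil =>
      intro q r qα qβ hq hr hqr hf
      have ha : ¬ D.iflows (D.dom a) i := by
        intro ha
        simp [ha] at hf
      cases hq with
      | cons hstep hrun =>
        exact ihα [] _ r qα qβ hrun hr
          (by rw [← hqr, D.gstep_skip i hstep ha]) (by simpa [ha] using hf)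
    | cons b β' ihβ =>
      intro q r qα qβ hq hr hqr hf
      by_cases ha : D.iflows (D.dom a) i
      · by_cases hb : D.iflows (D.dom b) i
        · simp only [List.filter_cons, decide_eq_true ha, decide_eq_true hb,
            if_pos, List.cons.injEq] at hf
          obtain ⟨rfl, hf'⟩ := hf
          cases hq with
          | cons hstepa hruna =>
            cases hr with
            | cons hstepb hrunb =>
              exact ihα β' _ _ qα qβ hruna hrunb
                (D.gstep_agree i hstepa hstepb hqr) hf'
        · cases hr with
          | cons hstepb hrunb =>
            exact ihβ q _ qα qβ hq hrunb
              (by rw [hqr, ← D.gstep_skip i hstepb hb]) (by simpa [hb] using hf)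
      · cases hq with
        | cons hstepa hruna =>
          exact ihα (b :: β') _ r qα qβ hruna hr
            (by rw [← hqr, D.gstep_skip i hstepa ha]) (by simpa [ha] using hf)

/-- the local state and buffer of process `πᵢ` after a global
execution is determined by the subsequence of actions `a` with
`dom a ⤳ πᵢ` in the implicit policy. -/
theorem local_state_determined {ι S M : Type} (D : DM ι S M)
    (i : ι) (α β : List (Act ι M)) (qα qβ : ι → S × List M)
    (hα : D.Run D.gInit α qα) (hβ : D.Run D.gInit β qβ)
    (h : α.filter (fun a => decide (D.iflows (D.dom a) i))
       = β.filter (fun a => decide (D.iflows (D.dom a) i))) :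
    qα i = qβ i := by
  exact D.run_agree i α β _ _ qα qβ hα hβ rfl h
end

section
/- For the Starlight switch filter function f defined by f(α·a) = (a = !cmdL) ∧ (number of ?toggle actions in α is odd), the switch process S satisfies local filter respect: for every local execution δ of S and action a with ¬f(δ·a), either a ≠ !cmdL (hence not an input of the low network L) or !cmdL is not executable from the state reached by δ. -/
/-- States of the Starlight switch process. -/
inductive SwState : Type
  | h | hr | hc | l | lr | lc
  deriving DecidableEq

/-- Actions of the Starlight switch process: receive actions `cmd`, `toggle`,
`res` and send actions `cmdL`, `cmdH`, `display`. -/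
inductive SwAct : Type
  | cmd | toggle | res | cmdL | cmdH | display
  deriving DecidableEq

/-- Partial transition function of the switch process. -/
def swStep : SwState → SwAct → Option SwState
  | .h, .toggle => some .l
  | .l, .toggle => some .h
  | .h, .res => some .hr
  | .hr, .display => some .h
  | .h, .cmd => some .hc
  | .hc, .cmdH => some .h
  | .l, .res => some .lr
  | .lr, .display => some .l
  | .l, .cmd => some .lc
  | .lc, .cmdL => some .l
  | _, _ => none

/-- State reached by executing a sequence of actions (`none` if the sequence
is not a valid local execution). -/
def swRun : SwState → List SwAct → Option SwState
  | s, [] => some s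
  | s, a :: rest => (swStep s a).bind (fun s' => swRun s' rest)

/-- The Starlight filter function: `f(α·a)` holds iff `a = !cmdL` and the
number of `?toggle` actions in `α` is odd. -/
def swFilter (l : List SwAct) : Bool :=
  (l.getLast? = some SwAct.cmdL) && (l.dropLast.count SwAct.toggle % 2 == 1)

/-- A state is in the low row. -/
def swLow : SwState → Bool
  | .l | .lr | .lc => true
  | _ => false

lemma swRun_low (δ : List SwAct) : ∀ (s0 s : SwState),
    swRun s0 δ = some s →
    swLow s = xor (swLow s0) (δ.count SwAct.toggle % 2 == 1) := by
  induction δ with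
  | nil =>
    intro s0 s h
    simp [swRun] at h
    subst h
    simp [List.count]
  | cons a rest ih =>
    intro s0 s h
    cases a <;> cases s0 <;>
      simp [swRun, swStep, Option.bind] at h <;>
      rw [ih _ _ h] <;>
      simp [swLow, List.count_cons] <;>
      rcases Nat.mod_two_eq_zero_or_one (rest.count SwAct.toggle) with h2 | h2 <;>
      simp [h2, Nat.add_mod]

/-- the switch process satisfies local filter respect for the
Starlight filter: for every local execution `δ` and action `a` with
`¬f(δ·a)`, either `a ≠ !cmdL` (hence not an input of the low network) or
`!cmdL` is not executable from the state reached by `δ`. -/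
theorem starlight_local_filter_respect
    (δ : List SwAct) (s : SwState) (a : SwAct)
    (hδ : swRun SwState.h δ = some s)
    (hf : swFilter (δ ++ [a]) = false) :
    a ≠ SwAct.cmdL ∨ swStep s SwAct.cmdL = none := by
  by_cases ha : a = SwAct.cmdL
  · subst ha
    right
    have hlow := swRun_low δ SwState.h s hδ
    simp [swFilter] at hf
    have : δ.count SwAct.toggle % 2 ≠ 1 := by
      intro hc
      exact absurd (hf) (by simp [hc])
    cases s <;> simp [swStep] <;>
      simp_all [swLow]
  · exact Or.inl ha
end

section
/- In the Starlight switch process, the action !cmdL only occurs after an odd number of ?toggle receptions: for every local execution δ·(!cmdL) of S, the number of ?toggle actions in δ is odd. -/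
/-- Parity tag of a state: 1 on the ℓ-row, 0 on the h-row. -/
def swPar : SwState → ℕ
  | .h => 0 | .hr => 0 | .hc => 0
  | .l => 1 | .lr => 1 | .lc => 1

lemma swRun_parity : ∀ (δ : List SwAct) (s s' : SwState),
    swRun s δ = some s' →
    (δ.count SwAct.toggle + swPar s) % 2 = swPar s' % 2 := by
  intro δ
  induction δ with
  | nil =>
    intro s s' h
    simp [swRun] at h
    subst h; simp
  | cons a rest ih =>
    intro s s' h
    simp only [swRun] at h
    cases hs : swStep s a with
    | none => rw [hs] at h; simp at h
    | some t =>
      rw [hs] at h; simp at h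
      have key := ih t s' h
      generalize swPar s' = p at key ⊢
      cases a <;> cases s <;>
          simp only [swStep, Option.some.injEq, reduceCtorEq] at hs <;>
          subst hs <;>
          simp [swPar, List.count_cons] at key ⊢ <;>
          omega

/-- in the Starlight switch, `!cmdL` occurs only after an odd
number of `?toggle` receptions: for every local execution `δ·(!cmdL)`, the
number of `?toggle` actions in `δ` is odd. -/
theorem starlight_cmdL_odd_toggles (δ : List SwAct) (s : SwState)
    (h : swRun SwState.h (δ ++ [SwAct.cmdL]) = some s) :
    Odd (δ.count SwAct.toggle) := by
  -- split run at the append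
  have hsplit : ∀ (α β : List SwAct) (s0 s2 : SwState),
      swRun s0 (α ++ β) = some s2 → ∃ s1, swRun s0 α = some s1 ∧ swRun s1 β = some s2 := by
    intro α
    induction α with
    | nil => intro β s0 s2 h; exact ⟨s0, rfl, h⟩
    | cons a rest ih =>
      intro β s0 s2 h
      simp only [List.cons_append, swRun] at h ⊢
      cases hs : swStep s0 a with
      | none => rw [hs] at h; simp at h
      | some t =>
        rw [hs] at h; simp at h ⊢
        exact ih β t s2 h
  obtain ⟨s1, h1, h2⟩ := hsplit δ [SwAct.cmdL] SwState.h s h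
  -- s1 must be lc
  have hs1 : s1 = SwState.lc := by
    cases s1 <;> simp_all [swRun, swStep]
  subst hs1
  have := swRun_parity δ SwState.h SwState.lc h1
  simp [swPar] at this
  exact Nat.odd_iff.mpr (by omega)
end
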